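/- Let T be a finite triangle mesh with face set F. The energy 𝓔(A) = Σ_{t ∈ F} [Λ(α_t) + Λ(β_t) + Λ(γ_t)] is concave on the angle structure space A_T = {angle assignments with α_t, β_t, γ_t > 0 and α_t + β_t + γ_t = π for each face t}, and strictly concave on A_T modulo nothing (strictly concave as a function of the independent variables (α_t, β_t) per face). -/

import Mathlib

open Real MeasureTheory intervalIntegral

open Set

/-- The Lobachevsky function. -/
noncomputable def lob (x : ℝ) : ℝ := -∫ t in (0:ℝ)..x, Real.log |2 * Real.sin t|

lemma integrableOn_neg_log : IntegrableOn Real.log (Set.Ioc (0:ℝ) 1) := by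
  have h : IntegrableOn (fun t : ℝ => -Real.log t) (Set.Ioc (0:ℝ) 1) := by
    apply intervalIntegral.integrableOn_deriv_of_nonneg (g := fun t => t - t * Real.log t)
    · exact (continuous_id.sub Real.continuous_mul_log).continuousOn
    · intro x hx
      have hx0 : x ≠ 0 := ne_of_gt hx.1
      have : HasDerivAt (fun t : ℝ => t - t * Real.log t) (1 - (1 * Real.log x + x * x⁻¹)) x :=
        (hasDerivAt_id x).sub ((hasDerivAt_id x).mul (Real.hasDerivAt_log hx0))
      convert this using 1
      field_simp
      ring
    · intro x hx
      simp only [neg_nonneg]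
      exact Real.log_nonpos hx.1.le hx.2.le
  have h2 := h.neg
  simp only [Pi.neg_def, neg_neg] at h2
  exact h2

lemma measurable_logsin : Measurable (fun t : ℝ => Real.log |2 * Real.sin t|) :=
  Real.measurable_log.comp ((measurable_const.mul Real.measurable_sin).abs)

lemma intervalIntegrable_logsin {x : ℝ} (h0 : 0 < x) (hx : x < π) :
    IntervalIntegrable (fun t => Real.log |2 * Real.sin t|) volume 0 x := by
  set f : ℝ → ℝ := fun t => Real.log |2 * Real.sin t| with hf
  set δ : ℝ := min x 1 with hδ
  have hδ0 : 0 < δ := lt_min h0 one_pos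
  have hδx : δ ≤ x := min_le_left _ _
  have hδ1 : δ ≤ 1 := min_le_right _ _
  have hA : IntegrableOn f (Set.Ioc 0 δ) := by
    apply Integrable.mono' (g := fun t => -Real.log t + 1)
    · exact ((integrableOn_neg_log.mono_set (Set.Ioc_subset_Ioc_right hδ1)).neg).add
        (integrableOn_const measure_Ioc_lt_top.ne)
    · exact measurable_logsin.aestronglyMeasurable
    · rw [MeasureTheory.ae_restrict_iff' measurableSet_Ioc]
      refine MeasureTheory.ae_of_all _ fun t ht => ?_
      have ht0 : 0 < t := ht.1
      have ht1 : t ≤ 1 := ht.2.trans hδ1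
      have htpi : t ≤ π / 2 := ht1.trans (by linarith [Real.pi_gt_three])
      have hsin_lb : 2 / π * t ≤ Real.sin t := Real.mul_le_sin ht0.le htpi
      have hsin_ub : Real.sin t ≤ t := Real.sin_le ht0.le
      have hsin_pos : 0 < Real.sin t := lt_of_lt_of_le (by positivity) hsin_lb
      have habs : |2 * Real.sin t| = 2 * Real.sin t := abs_of_pos (by linarith)
      have hub : Real.log (2 * Real.sin t) ≤ Real.log t + 1 := by
        have := Real.log_le_log (by linarith) (show 2 * Real.sin t ≤ 2 * t by linarith)
        rw [Real.log_mul two_ne_zero ht0.ne'] at this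
        have h2 : Real.log 2 ≤ 1 := by
          have := Real.log_le_sub_one_of_pos (show (0:ℝ) < 2 by norm_num)
          linarith
        linarith
      have hlb : Real.log t ≤ Real.log (2 * Real.sin t) := by
        have h4pi : (1:ℝ) ≤ 4 / π := by
          rw [le_div_iff₀ Real.pi_pos]
          linarith [Real.pi_lt_d2]
        have h1 : t ≤ 4 / π * t := le_mul_of_one_le_left ht0.le h4pi
        have h2 : 4 / π * t ≤ 2 * Real.sin t := by
          have : 2 * (2 / π * t) ≤ 2 * Real.sin t := by linarith
          calc 4 / π * t = 2 * (2 / π * t) := by ring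
            _ ≤ 2 * Real.sin t := this
        exact Real.log_le_log ht0 (h1.trans h2)
      have hlt : Real.log t ≤ 0 := Real.log_nonpos ht0.le ht1
      rw [hf]
      simp only [habs, Real.norm_eq_abs]
      rcases abs_cases (Real.log (2 * Real.sin t)) with ⟨he, _⟩ | ⟨he, _⟩ <;> rw [he] <;> linarith
  have hB : IntegrableOn f (Set.Ioc δ x) := by
    have hcont : ContinuousOn f (Set.Icc δ x) := by
      apply ContinuousOn.log
      · exact ((continuous_const.mul Real.continuous_sin).abs).continuousOn
      · intro t ht
        have : 0 < Real.sin t := Real.sin_pos_of_pos_of_lt_pi (hδ0.trans_le ht.1)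
          (lt_of_le_of_lt ht.2 hx)
        simp only [abs_ne_zero]
        positivity
    exact (hcont.integrableOn_Icc).mono_set Set.Ioc_subset_Icc_self
  have : IntegrableOn f (Set.Ioc 0 x) := by
    rw [← Set.Ioc_union_Ioc_eq_Ioc hδ0.le hδx]
    exact hA.union hB
  rw [intervalIntegrable_iff_integrableOn_Ioc_of_le h0.le]
  exact this

lemma lob_hasDerivAt {x : ℝ} (h0 : 0 < x) (hx : x < π) :
    HasDerivAt lob (-Real.log (2 * Real.sin x)) x := by
  have hsin : 0 < Real.sin x := Real.sin_pos_of_pos_of_lt_pi h0 hx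
  have hcont : ContinuousAt (fun t : ℝ => Real.log |2 * Real.sin t|) x := by
    apply (Real.continuousAt_log (by simp only [abs_ne_zero]; positivity)).comp
    exact ((continuous_const.mul Real.continuous_sin).abs).continuousAt
  have hmeas : StronglyMeasurableAtFilter (fun t : ℝ => Real.log |2 * Real.sin t|) (nhds x) :=
    measurable_logsin.stronglyMeasurable.stronglyMeasurableAtFilter
  have h := (intervalIntegral.integral_hasDerivAt_right (intervalIntegrable_logsin h0 hx)
    hmeas hcont).neg
  have habs : |2 * Real.sin x| = 2 * Real.sin x := abs_of_pos (by linarith)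
  rw [habs] at h
  exact h

lemma neglog_hasDerivAt {x : ℝ} (h0 : 0 < x) (hx : x < π) :
    HasDerivAt (fun y => -Real.log (2 * Real.sin y)) (-(Real.cos x / Real.sin x)) x := by
  have hsin : 0 < Real.sin x := Real.sin_pos_of_pos_of_lt_pi h0 hx
  have h : HasDerivAt (fun y => 2 * Real.sin y) (2 * Real.cos x) x :=
    (Real.hasDerivAt_sin x).const_mul 2
  have h2 := (h.log (by positivity)).neg
  refine h2.congr_deriv ?_
  field_simp

lemma comb_pos {a b x y : ℝ} (ha : 0 ≤ a) (hb : 0 ≤ b) (hab : a + b = 1)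
    (hx : 0 < x) (hy : 0 < y) : 0 < a * x + b * y := by
  rcases ha.eq_or_lt with h | h
  · rw [← h] at hab ⊢; simp at hab; simp [hab, hy]
  · nlinarith [mul_pos h hx, mul_nonneg hb hy.le]

lemma cot_quad {p q r u v : ℝ} (hp : 0 < p) (hq : 0 < q) (hr : 0 < r)
    (hsum : p + q + r = π) (huv : u ≠ 0 ∨ v ≠ 0) :
    0 < u^2 * (Real.cos p / Real.sin p) + v^2 * (Real.cos q / Real.sin q)
      + (u+v)^2 * (Real.cos r / Real.sin r) := by
  have hpπ : p < π := by linarith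
  have hqπ : q < π := by linarith
  have hrπ : r < π := by linarith
  have sp : 0 < Real.sin p := Real.sin_pos_of_pos_of_lt_pi hp hpπ
  have sq : 0 < Real.sin q := Real.sin_pos_of_pos_of_lt_pi hq hqπ
  have sr : 0 < Real.sin r := Real.sin_pos_of_pos_of_lt_pi hr hrπ
  set a := Real.cos p / Real.sin p with hadef
  set b := Real.cos q / Real.sin q with hbdef
  set c := Real.cos r / Real.sin r with hcdef
  have hrq : r = π - (p + q) := by linarith
  have hcr : Real.cos r = -(Real.cos p * Real.cos q - Real.sin p * Real.sin q) := by
    rw [hrq, Real.cos_pi_sub, Real.cos_add]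
  have hsr : Real.sin r = Real.sin p * Real.cos q + Real.cos p * Real.sin q := by
    rw [hrq, Real.sin_pi_sub, Real.sin_add]
  have hid : a * b + b * c + c * a = 1 := by
    have h : (Real.cos p * Real.cos q) * Real.sin r + (Real.cos q * Real.cos r) * Real.sin p
        + (Real.cos r * Real.cos p) * Real.sin q = Real.sin p * Real.sin q * Real.sin r := by
      rw [hcr, hsr]; ring
    have heq : a * b + b * c + c * a = (Real.cos p * Real.cos q * Real.sin r
        + Real.cos q * Real.cos r * Real.sin p + Real.cos r * Real.cos p * Real.sin q)
        / (Real.sin p * Real.sin q * Real.sin r) := by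
      rw [hadef, hbdef, hcdef]
      field_simp
    rw [heq, h, div_self (by positivity)]
  have hac : 0 < a + c := by
    have h1 : Real.cos p * Real.sin r + Real.cos r * Real.sin p = Real.sin q := by
      rw [hcr, hsr]; nlinarith [Real.sin_sq_add_cos_sq p]
    have : a + c = Real.sin q / (Real.sin p * Real.sin r) := by
      rw [hadef, hcdef, div_add_div _ _ sp.ne' sr.ne', ← h1]; ring_nf
    rw [this]; positivity
  have hbc : 0 < b + c := by
    have h1 : Real.cos q * Real.sin r + Real.cos r * Real.sin q = Real.sin p := by
      rw [hcr, hsr]; nlinarith [Real.sin_sq_add_cos_sq q]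
    have : b + c = Real.sin p / (Real.sin q * Real.sin r) := by
      rw [hbdef, hcdef, div_add_div _ _ sq.ne' sr.ne', ← h1]; ring_nf
    rw [this]; positivity
  have key : (a + c) * (u^2 * a + v^2 * b + (u+v)^2 * c)
      = ((a+c)*u + c*v)^2 + (a*b + b*c + c*a) * v^2 := by ring
  rw [hid] at key
  by_cases hv : v = 0
  · have hu : u ≠ 0 := by rcases huv with h | h; exact h; exact absurd hv h
    have hu2 : 0 < u^2 := lt_of_le_of_ne (sq_nonneg u) (Ne.symm (pow_ne_zero 2 hu))
    rw [hv]
    have h2 : 0 < u^2 * (a + c) := mul_pos hu2 hac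
    have h3 : u^2 * a + 0^2 * b + (u+0)^2 * c = u^2 * (a + c) := by ring
    rw [h3]
    exact h2
  · have hv2 : 0 < v^2 := lt_of_le_of_ne (sq_nonneg v) (Ne.symm (pow_ne_zero 2 hv))
    have h2 : 0 < (a + c) * (u^2 * a + v^2 * b + (u+v)^2 * c) := by
      rw [key]
      have := sq_nonneg ((a+c)*u + c*v)
      linarith
    by_contra hQ
    push_neg at hQ
    have := mul_nonpos_of_nonneg_of_nonpos hac.le hQ
    linarith

noncomputable def face (p q : ℝ) : ℝ := lob p + lob q + lob (π - p - q)

lemma face_strict {x0 x1 y0 y1 a b : ℝ}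
    (hx0 : 0 < x0) (hx1 : 0 < x1) (hxs : x0 + x1 < π)
    (hy0 : 0 < y0) (hy1 : 0 < y1) (hys : y0 + y1 < π)
    (hne : x0 ≠ y0 ∨ x1 ≠ y1)
    (ha : 0 < a) (hb : 0 < b) (hab : a + b = 1) :
    a * face x0 x1 + b * face y0 y1 < face (a*x0 + b*y0) (a*x1 + b*y1) := by
  set u : ℝ := y0 - x0 with hu
  set v : ℝ := y1 - x1 with hv
  set P : ℝ → ℝ := fun θ => x0 + θ * u with hP
  set Q : ℝ → ℝ := fun θ => x1 + θ * v with hQ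
  set R : ℝ → ℝ := fun θ => π - P θ - Q θ with hR
  have hmem : ∀ θ ∈ Icc (0:ℝ) 1, 0 < P θ ∧ 0 < Q θ ∧ 0 < R θ := by
    intro θ hθ
    have h1 : P θ = (1 - θ) * x0 + θ * y0 := by rw [hP]; ring
    have h2 : Q θ = (1 - θ) * x1 + θ * y1 := by rw [hQ]; ring
    have h3 : R θ = (1 - θ) * (π - x0 - x1) + θ * (π - y0 - y1) := by
      rw [hR, hP, hQ, hu, hv]; ring
    have h1' : 0 ≤ 1 - θ := by linarith [hθ.2]
    have hsum : 1 - θ + θ = 1 := by ring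
    refine ⟨?_, ?_, ?_⟩
    · rw [h1]; exact comb_pos h1' hθ.1 hsum hx0 hy0
    · rw [h2]; exact comb_pos h1' hθ.1 hsum hx1 hy1
    · rw [h3]; exact comb_pos h1' hθ.1 hsum (by linarith) (by linarith)
  have hmemπ : ∀ θ ∈ Icc (0:ℝ) 1, P θ < π ∧ Q θ < π ∧ R θ < π := by
    intro θ hθ
    obtain ⟨h1, h2, h3⟩ := hmem θ hθ
    have : P θ + Q θ + R θ = π := by rw [hR]; ring
    exact ⟨by linarith, by linarith, by linarith⟩
  set g : ℝ → ℝ := fun θ => lob (P θ) + lob (Q θ) + lob (R θ) with hg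
  set g1 : ℝ → ℝ := fun θ => -Real.log (2 * Real.sin (P θ)) * u
      + -Real.log (2 * Real.sin (Q θ)) * v + -Real.log (2 * Real.sin (R θ)) * (0 - u - v)
      with hg1
  have hPd : ∀ θ : ℝ, HasDerivAt P u θ := by
    intro θ
    simpa [hP] using ((hasDerivAt_id θ).mul_const u).const_add x0
  have hQd : ∀ θ : ℝ, HasDerivAt Q v θ := by
    intro θ
    simpa [hQ] using ((hasDerivAt_id θ).mul_const v).const_add x1
  have hRd : ∀ θ : ℝ, HasDerivAt R (0 - u - v) θ := by
    intro θ
    exact ((hasDerivAt_const θ π).sub (hPd θ)).sub (hQd θ)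
  have hgd : ∀ θ ∈ Icc (0:ℝ) 1, HasDerivAt g (g1 θ) θ := by
    intro θ hθ
    obtain ⟨h1, h2, h3⟩ := hmem θ hθ
    obtain ⟨h4, h5, h6⟩ := hmemπ θ hθ
    exact (((lob_hasDerivAt h1 h4).comp θ (hPd θ)).add
      ((lob_hasDerivAt h2 h5).comp θ (hQd θ))).add
      ((lob_hasDerivAt h3 h6).comp θ (hRd θ))
  set g2 : ℝ → ℝ := fun θ => -(Real.cos (P θ) / Real.sin (P θ)) * u * u
      + -(Real.cos (Q θ) / Real.sin (Q θ)) * v * v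
      + -(Real.cos (R θ) / Real.sin (R θ)) * (0 - u - v) * (0 - u - v) with hg2
  have hg1d : ∀ θ ∈ Icc (0:ℝ) 1, HasDerivAt g1 (g2 θ) θ := by
    intro θ hθ
    obtain ⟨h1, h2, h3⟩ := hmem θ hθ
    obtain ⟨h4, h5, h6⟩ := hmemπ θ hθ
    exact ((((neglog_hasDerivAt h1 h4).comp θ (hPd θ)).mul_const u).add
      (((neglog_hasDerivAt h2 h5).comp θ (hQd θ)).mul_const v)).add
      (((neglog_hasDerivAt h3 h6).comp θ (hRd θ)).mul_const (0 - u - v))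
  have hsc : StrictConcaveOn ℝ (Icc (0:ℝ) 1) g := by
    apply strictConcaveOn_of_deriv2_neg (convex_Icc 0 1)
    · intro θ hθ
      exact (hgd θ hθ).continuousAt.continuousWithinAt
    · intro θ hθ
      rw [interior_Icc] at hθ
      have hde : deriv g =ᶠ[nhds θ] g1 := by
        filter_upwards [isOpen_Ioo.mem_nhds hθ] with s hs
        exact (hgd s (Ioo_subset_Icc_self hs)).deriv
      have : deriv (deriv g) θ = g2 θ := by
        rw [Filter.EventuallyEq.deriv_eq hde]
        exact (hg1d θ (Ioo_subset_Icc_self hθ)).deriv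
      show deriv^[2] g θ < 0
      rw [Function.iterate_succ, Function.iterate_one, Function.comp_apply, this]
      obtain ⟨h1, h2, h3⟩ := hmem θ (Ioo_subset_Icc_self hθ)
      have hsum : P θ + Q θ + R θ = π := by rw [hR]; ring
      have huv : u ≠ 0 ∨ v ≠ 0 := by
        rcases hne with h | h
        · left; rw [hu]; exact sub_ne_zero.mpr (Ne.symm h)
        · right; rw [hv]; exact sub_ne_zero.mpr (Ne.symm h)
      have hq := cot_quad h1 h2 h3 hsum huv
      rw [hg2]
      simp only
      nlinarith [hq]
  have h01 : (0:ℝ) ∈ Icc (0:ℝ) 1 := by constructor <;> norm_num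
  have h11 : (1:ℝ) ∈ Icc (0:ℝ) 1 := by constructor <;> norm_num
  have := hsc.2 h01 h11 (by norm_num) ha hb hab
  simp only [smul_eq_mul, mul_zero, mul_one, zero_add] at this
  have hg0 : g 0 = face x0 x1 := by
    rw [hg]; simp [hP, hQ, hR, face]
  have hg1v : g 1 = face y0 y1 := by
    rw [hg]; simp only [hP, hQ, hR, hu, hv, one_mul]
    rw [face]
    ring_nf
  have hgb : g b = face (a*x0 + b*y0) (a*x1 + b*y1) := by
    rw [hg]
    have e1 : P b = a*x0 + b*y0 := by
      simp only [hP, hu]; linear_combination (-x0) * hab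
    have e2 : Q b = a*x1 + b*y1 := by
      simp only [hQ, hv]; linear_combination (-x1) * hab
    have e3 : R b = π - (a*x0 + b*y0) - (a*x1 + b*y1) := by
      simp only [hR]; rw [e1, e2]
    simp only
    rw [e1, e2, e3, face]
  rw [hg0, hg1v, hgb] at this
  exact this

lemma face_le {x0 x1 y0 y1 a b : ℝ}
    (hx0 : 0 < x0) (hx1 : 0 < x1) (hxs : x0 + x1 < π)
    (hy0 : 0 < y0) (hy1 : 0 < y1) (hys : y0 + y1 < π)
    (ha : 0 ≤ a) (hb : 0 ≤ b) (hab : a + b = 1) :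
    a * face x0 x1 + b * face y0 y1 ≤ face (a*x0 + b*y0) (a*x1 + b*y1) := by
  rcases ha.eq_or_lt with h | h
  · rw [← h] at hab ⊢
    simp at hab
    simp [hab]
  rcases hb.eq_or_lt with h' | h'
  · rw [← h'] at hab ⊢
    simp at hab
    simp [hab]
  by_cases hne : x0 = y0 ∧ x1 = y1
  · obtain ⟨h1, h2⟩ := hne
    subst h1; subst h2
    have e1 : a * x0 + b * x0 = x0 := by linear_combination x0 * hab
    have e2 : a * x1 + b * x1 = x1 := by linear_combination x1 * hab
    rw [e1, e2]
    have : a * face x0 x1 + b * face x0 x1 = face x0 x1 := by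
      linear_combination (face x0 x1) * hab
    linarith [this]
  · have hne' : x0 ≠ y0 ∨ x1 ≠ y1 := by tauto
    exact (face_strict hx0 hx1 hxs hy0 hy1 hys hne' h h' hab).le

theorem energy_concave (F : Type*) [Fintype F] :
    ConcaveOn ℝ
      {A : F → Fin 3 → ℝ | ∀ t, (0 < A t 0 ∧ 0 < A t 1 ∧ 0 < A t 2) ∧
        A t 0 + A t 1 + A t 2 = Real.pi}
      (fun A => ∑ t, (lob (A t 0) + lob (A t 1) + lob (A t 2))) ∧
    StrictConcaveOn ℝ
      {B : F → Fin 2 → ℝ | ∀ t, 0 < B t 0 ∧ 0 < B t 1 ∧ B t 0 + B t 1 < Real.pi}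
      (fun B => ∑ t, (lob (B t 0) + lob (B t 1) + lob (Real.pi - B t 0 - B t 1))) := by
  constructor
  · constructor
    · -- convexity of S3
      intro A hA A' hA' a b ha hb hab
      intro t
      obtain ⟨⟨h0, h1, h2⟩, hs⟩ := hA t
      obtain ⟨⟨h0', h1', h2'⟩, hs'⟩ := hA' t
      simp only [Pi.add_apply, Pi.smul_apply, smul_eq_mul]
      refine ⟨⟨comb_pos ha hb hab h0 h0', comb_pos ha hb hab h1 h1',
        comb_pos ha hb hab h2 h2'⟩, ?_⟩
      linear_combination a * hs + b * hs' + Real.pi * hab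
    · intro A hA A' hA' a b ha hb hab
      simp only [smul_eq_mul, Finset.mul_sum, ← Finset.sum_add_distrib]
      apply Finset.sum_le_sum
      intro t _
      obtain ⟨⟨h0, h1, h2⟩, hs⟩ := hA t
      obtain ⟨⟨h0', h1', h2'⟩, hs'⟩ := hA' t
      simp only [Pi.add_apply, Pi.smul_apply, smul_eq_mul]
      have e1 : A t 2 = Real.pi - A t 0 - A t 1 := by linarith
      have e2 : A' t 2 = Real.pi - A' t 0 - A' t 1 := by linarith
      rw [e1, e2]
      have e3 : a * (Real.pi - A t 0 - A t 1) + b * (Real.pi - A' t 0 - A' t 1)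
          = Real.pi - (a * A t 0 + b * A' t 0) - (a * A t 1 + b * A' t 1) := by
        linear_combination Real.pi * hab
      rw [e3]
      have := face_le (x0 := A t 0) (x1 := A t 1) (y0 := A' t 0) (y1 := A' t 1)
        h0 h1 (by linarith) h0' h1' (by linarith) ha hb hab
      simpa only [face, mul_add] using this
  · constructor
    · intro B hB C hC a b ha hb hab
      intro t
      obtain ⟨h0, h1, hs⟩ := hB t
      obtain ⟨h0', h1', hs'⟩ := hC t
      simp only [Pi.add_apply, Pi.smul_apply, smul_eq_mul]
      refine ⟨comb_pos ha hb hab h0 h0', comb_pos ha hb hab h1 h1', ?_⟩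
      have := comb_pos ha hb hab (show 0 < Real.pi - (B t 0 + B t 1) by linarith)
        (show 0 < Real.pi - (C t 0 + C t 1) by linarith)
      nlinarith [this, hab]
    · intro B hB C hC hne a b ha hb hab
      simp only [smul_eq_mul, Finset.mul_sum, ← Finset.sum_add_distrib]
      obtain ⟨t0, ht0⟩ := Function.ne_iff.mp hne
      apply Finset.sum_lt_sum
      · intro t _
        obtain ⟨h0, h1, hs⟩ := hB t
        obtain ⟨h0', h1', hs'⟩ := hC t
        simp only [Pi.add_apply, Pi.smul_apply, smul_eq_mul]
        have := face_le (x0 := B t 0) (x1 := B t 1) (y0 := C t 0) (y1 := C t 1)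
          h0 h1 hs h0' h1' hs' ha.le hb.le hab
        simpa only [face, mul_add] using this
      · refine ⟨t0, Finset.mem_univ t0, ?_⟩
        obtain ⟨h0, h1, hs⟩ := hB t0
        obtain ⟨h0', h1', hs'⟩ := hC t0
        simp only [Pi.add_apply, Pi.smul_apply, smul_eq_mul]
        have hne2 : B t0 0 ≠ C t0 0 ∨ B t0 1 ≠ C t0 1 := by
          by_contra hcon
          push_neg at hcon
          apply ht0
          funext i
          fin_cases i
          · exact hcon.1
          · exact hcon.2
        have := face_strict (x0 := B t0 0) (x1 := B t0 1) (y0 := C t0 0) (y1 := C t0 1)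
          h0 h1 hs h0' h1' hs' hne2 ha hb hab
        simpa only [face, mul_add] using this
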